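/- arXiv:1101.5220 — 5 statements merged into one kernel-verified Lean document; each statement's English description precedes it below -/
import Mathlib

section
/- For every nonnegative integer k, (2k)! · Σ_{i=0}^{2k} (-1)^i / (2^{2k-i} · (2k-i)! · (i+1)!) = 1 / ((2k+1) · 2^{2k}). -/
lemma key_sum (k : ℕ) :
    ∑ i ∈ Finset.range (2 * k + 1), (-2 : ℚ) ^ i * ((2 * k + 1).choose (i + 1)) = 1 := by
  have h := add_pow (-2 : ℚ) 1 (2 * k + 1)
  rw [Finset.sum_range_succ'] at h
  simp only [one_pow, mul_one, Nat.choose_zero_right, Nat.cast_one, pow_zero] at h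
  have h2 : ((-2 : ℚ) + 1) ^ (2 * k + 1) = -1 := by norm_num; exact Odd.neg_one_pow ⟨k, rfl⟩
  rw [h2] at h
  have h3 : ∑ i ∈ Finset.range (2 * k + 1), (-2 : ℚ) ^ (i + 1) * ((2 * k + 1).choose (i + 1))
      = -2 * ∑ i ∈ Finset.range (2 * k + 1), (-2 : ℚ) ^ i * ((2 * k + 1).choose (i + 1)) := by
    rw [Finset.mul_sum]
    refine Finset.sum_congr rfl fun i _ => by ring
  rw [h3] at h
  linarith

theorem leading_coefficient_identity (k : ℕ) :
    ((2 * k).factorial : ℚ) *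
        ∑ i ∈ Finset.range (2 * k + 1),
          (-1 : ℚ) ^ i / (2 ^ (2 * k - i) * ((2 * k - i).factorial : ℚ) * ((i + 1).factorial : ℚ)) =
      1 / ((2 * k + 1) * 2 ^ (2 * k)) := by
  rw [Finset.mul_sum]
  have hterm : ∀ i ∈ Finset.range (2 * k + 1),
      ((2 * k).factorial : ℚ) *
        ((-1 : ℚ) ^ i / (2 ^ (2 * k - i) * ((2 * k - i).factorial : ℚ) * ((i + 1).factorial : ℚ)))
      = (-2 : ℚ) ^ i * ((2 * k + 1).choose (i + 1)) * (1 / ((2 * k + 1) * 2 ^ (2 * k))) := by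
    intro i hi
    rw [Finset.mem_range] at hi
    have hle : i ≤ 2 * k := Nat.lt_succ_iff.mp hi
    have hc : ((2 * k + 1).choose (i + 1) : ℚ) * ((i + 1).factorial) * ((2 * k - i).factorial)
        = ((2 * k + 1).factorial) := by
      have := Nat.choose_mul_factorial_mul_factorial (Nat.succ_le_succ hle)
      rw [Nat.succ_sub_succ] at this
      exact_mod_cast this
    have hpow : (2 : ℚ) ^ (2 * k) = 2 ^ (2 * k - i) * 2 ^ i := by
      rw [← pow_add, Nat.sub_add_cancel hle]
    have hfac : ((2 * k + 1).factorial : ℚ) = (2 * k + 1) * (2 * k).factorial := by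
      rw [Nat.factorial_succ]; push_cast; ring
    have h1 : ((2 * k - i).factorial : ℚ) ≠ 0 := Nat.cast_ne_zero.mpr (Nat.factorial_ne_zero _)
    have h2 : ((i + 1).factorial : ℚ) ≠ 0 := Nat.cast_ne_zero.mpr (Nat.factorial_ne_zero _)
    have h3 : (2 : ℚ) ^ (2 * k - i) ≠ 0 := by positivity
    have h4 : ((2 * k : ℕ) : ℚ) + 1 ≠ 0 := by positivity
    have hneg : (-2 : ℚ) ^ i = (-1) ^ i * 2 ^ i := by rw [neg_pow]
    rw [hneg, hpow]
    field_simp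
    linear_combination -hc -
      hfac
  rw [Finset.sum_congr rfl hterm, ← Finset.sum_mul, key_sum, one_mul]
end

section
/- Define m_k = (e^{k/2}/k) · Σ_{m=0}^{k-1} (k^m/m!) · C(k, m+1) for positive integers k and set c_0 = √5/2 + 2·log((1+√5)/2). Then limsup_{k→∞} (m_k)^{1/k} ≤ e^{c_0}. In particular, any random variable whose k-th moments are m_k is almost surely bounded by e^{c_0}. -/
open MeasureTheory Filter Finset

noncomputable def momentY (k : ℕ) : ℝ :=
  (Real.exp (k / 2) / k) * ∑ m ∈ Finset.range k, (k : ℝ) ^ m / m.factorial * (Nat.choose k (m + 1))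

private lemma momentY_nonneg (k : ℕ) : 0 ≤ momentY k := by
  unfold momentY
  apply mul_nonneg (div_nonneg (Real.exp_pos _).le (Nat.cast_nonneg _))
  exact Finset.sum_nonneg fun m _ => mul_nonneg
    (div_nonneg (pow_nonneg (Nat.cast_nonneg _) _) (Nat.cast_nonneg _)) (Nat.cast_nonneg _)

private lemma momentY_pos {k : ℕ} (hk : 0 < k) : 0 < momentY k := by
  unfold momentY
  apply mul_pos (div_pos (Real.exp_pos _) (by exact_mod_cast hk))
  apply Finset.sum_pos' (fun m _ => mul_nonneg
    (div_nonneg (pow_nonneg (Nat.cast_nonneg _) _) (Nat.cast_nonneg _)) (Nat.cast_nonneg _))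
  refine ⟨0, Finset.mem_range.2 hk, ?_⟩
  simp [Nat.choose_one_right]
  exact_mod_cast hk

private lemma momentY_le (k : ℕ) (hk : 0 < k) :
    momentY k ≤ Real.exp (Real.sqrt 5 / 2 + 2 * Real.log ((1 + Real.sqrt 5) / 2)) ^ k := by
  have hs5 : Real.sqrt 5 ^ 2 = 5 := Real.sq_sqrt (by norm_num)
  have hs5nn : 0 ≤ Real.sqrt 5 := Real.sqrt_nonneg 5
  have h2 : 2 < Real.sqrt 5 := by nlinarith
  have h3 : Real.sqrt 5 < 3 := by nlinarith
  set φ : ℝ := (1 + Real.sqrt 5) / 2 with hφdef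
  set t : ℝ := (Real.sqrt 5 - 1) / 2 with htdef
  have htφ : t * φ = 1 := by rw [htdef, hφdef]; nlinarith
  have ht0 : 0 < t := by rw [htdef]; nlinarith
  have ht1 : t < 1 := by rw [htdef]; nlinarith
  have hφ1 : 1 < φ := by rw [hφdef]; nlinarith
  have hφ0 : (0:ℝ) < φ := by linarith
  have hsq : 1 + φ = φ ^ 2 := by rw [hφdef]; nlinarith
  have h1φ : (0:ℝ) < 1 + φ := by linarith
  have hk1 : (1:ℝ) ≤ (k:ℝ) := by exact_mod_cast hk
  have hk0 : (0:ℝ) < (k:ℝ) := by linarith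
  -- term bound
  have hterm : ∀ m ∈ Finset.range k, (k : ℝ) ^ m / m.factorial * (Nat.choose k (m + 1)) ≤
      Real.exp (k * t) * (t * (φ ^ (m+1) * (Nat.choose k (m+1) : ℝ))) := by
    intro m _
    have h1 : ((k : ℝ) * t) ^ m / m.factorial ≤ Real.exp (k * t) :=
      Real.pow_div_factorial_le_exp ((k:ℝ) * t) (by positivity) m
    have hkm : (k : ℝ) ^ m = ((k:ℝ) * t) ^ m * φ ^ m := by
      rw [← mul_pow, mul_assoc, htφ, mul_one]
    have hphi : t * (φ ^ (m+1) * (Nat.choose k (m+1) : ℝ))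
        = φ ^ m * (Nat.choose k (m+1) : ℝ) := by
      rw [pow_succ, show t * (φ ^ m * φ * (Nat.choose k (m+1) : ℝ))
        = (t * φ) * (φ ^ m * (Nat.choose k (m+1) : ℝ)) by ring, htφ, one_mul]
    rw [hkm, hphi]
    have hφm : (0:ℝ) ≤ φ ^ m * (Nat.choose k (m+1) : ℝ) := by positivity
    calc ((k:ℝ)*t) ^ m * φ ^ m / m.factorial * (Nat.choose k (m+1) : ℝ)
        = (((k:ℝ)*t) ^ m / m.factorial) * (φ ^ m * (Nat.choose k (m+1) : ℝ)) := by ring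
      _ ≤ Real.exp (k*t) * (φ ^ m * (Nat.choose k (m+1) : ℝ)) :=
          mul_le_mul_of_nonneg_right h1 hφm
  have hsum : ∑ m ∈ Finset.range k, (k : ℝ) ^ m / m.factorial * (Nat.choose k (m + 1)) ≤
      Real.exp (k * t) * (t * (1 + φ) ^ k) := by
    calc ∑ m ∈ Finset.range k, (k : ℝ) ^ m / m.factorial * (Nat.choose k (m + 1))
        ≤ ∑ m ∈ Finset.range k, Real.exp (k * t) * (t * (φ ^ (m+1) * (Nat.choose k (m+1) : ℝ))) :=
          Finset.sum_le_sum hterm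
      _ = Real.exp (k * t) * (t * ∑ m ∈ Finset.range k, φ ^ (m+1) * (Nat.choose k (m+1) : ℝ)) := by
          rw [← Finset.mul_sum, ← Finset.mul_sum]
      _ ≤ Real.exp (k * t) * (t * (1 + φ) ^ k) := by
          apply mul_le_mul_of_nonneg_left _ (Real.exp_pos _).le
          apply mul_le_mul_of_nonneg_left _ ht0.le
          have hbin : (φ + 1) ^ k
              = ∑ j ∈ Finset.range (k+1), φ ^ j * 1 ^ (k - j) * (Nat.choose k j : ℝ) :=
            add_pow φ 1 k
          have hsplit : ∑ j ∈ Finset.range (k+1), φ ^ j * (Nat.choose k j : ℝ)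
              = (∑ m ∈ Finset.range k, φ ^ (m+1) * (Nat.choose k (m+1) : ℝ))
                + φ ^ 0 * (Nat.choose k 0 : ℝ) :=
            Finset.sum_range_succ' _ k
          have hbin2 : (1 + φ) ^ k
              = (∑ m ∈ Finset.range k, φ ^ (m+1) * (Nat.choose k (m+1) : ℝ)) + 1 := by
            rw [add_comm (1:ℝ) φ, hbin]
            simp only [one_pow, mul_one]
            rw [hsplit]; simp
          rw [hbin2]; linarith
  -- right-hand side
  have hrhs : Real.exp (Real.sqrt 5 / 2 + 2 * Real.log φ) ^ k
      = Real.exp ((k:ℝ) / 2) * Real.exp ((k:ℝ) * t) * (1 + φ) ^ k := by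
    rw [← Real.exp_nat_mul]
    have hlog : 2 * Real.log φ = Real.log (1 + φ) := by
      rw [hsq, Real.log_pow]; push_cast; ring
    have hexpand : (k:ℝ) * (Real.sqrt 5 / 2 + 2 * Real.log φ)
        = (k:ℝ) / 2 + (k:ℝ) * t + (k:ℝ) * Real.log (1 + φ) := by
      rw [← hlog, htdef]; ring
    rw [hexpand, Real.exp_add, Real.exp_add]
    congr 1
    rw [Real.exp_nat_mul, Real.exp_log h1φ]
  unfold momentY
  rw [hrhs]
  calc Real.exp ((k:ℝ) / 2) / k * ∑ m ∈ Finset.range k, (k : ℝ) ^ m / m.factorial * (Nat.choose k (m + 1))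
      ≤ Real.exp ((k:ℝ) / 2) / k * (Real.exp ((k:ℝ) * t) * (t * (1 + φ) ^ k)) :=
        mul_le_mul_of_nonneg_left hsum (by positivity)
    _ = Real.exp ((k:ℝ) / 2) * Real.exp ((k:ℝ) * t) * (1 + φ) ^ k * (t / k) := by ring
    _ ≤ Real.exp ((k:ℝ) / 2) * Real.exp ((k:ℝ) * t) * (1 + φ) ^ k * 1 := by
        apply mul_le_mul_of_nonneg_left _ (by positivity)
        rw [div_le_one hk0]; linarith
    _ = Real.exp ((k:ℝ) / 2) * Real.exp ((k:ℝ) * t) * (1 + φ) ^ k := mul_one _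

theorem momentY_growth_and_bound :
    limsup (fun k : ℕ => momentY k ^ ((1 : ℝ) / k)) atTop ≤
        Real.exp (Real.sqrt 5 / 2 + 2 * Real.log ((1 + Real.sqrt 5) / 2)) ∧
      ∀ {Ω : Type} [MeasurableSpace Ω] (μ : Measure Ω) [IsProbabilityMeasure μ] (Y : Ω → ℝ),
        Measurable Y → (∀ ω, 0 < Y ω) →
        (∀ k : ℕ, 0 < k → ∫ ω, Y ω ^ k ∂μ = momentY k) →
        μ {ω | Real.exp (Real.sqrt 5 / 2 + 2 * Real.log ((1 + Real.sqrt 5) / 2)) < Y ω} = 0 := by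
  set B : ℝ := Real.exp (Real.sqrt 5 / 2 + 2 * Real.log ((1 + Real.sqrt 5) / 2)) with hBdef
  have hB0 : 0 < B := Real.exp_pos _
  have hle : ∀ k : ℕ, 0 < k → momentY k ^ ((1 : ℝ) / k) ≤ B := by
    intro k hk
    have hk0 : (0:ℝ) < (k:ℝ) := by exact_mod_cast hk
    have h := momentY_le k hk
    have h1 : momentY k ^ ((1 : ℝ) / k) ≤ (B ^ k) ^ ((1 : ℝ) / k) :=
      Real.rpow_le_rpow (momentY_nonneg k) h (by positivity)
    calc momentY k ^ ((1 : ℝ) / k) ≤ (B ^ k) ^ ((1 : ℝ) / k) := h1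
      _ = B := by
          rw [← Real.rpow_natCast B k, ← Real.rpow_mul hB0.le]
          rw [mul_one_div, div_self hk0.ne', Real.rpow_one]
  constructor
  · apply Filter.limsup_le_of_le
    · exact Filter.isCoboundedUnder_le_of_le atTop
        fun k => Real.rpow_nonneg (momentY_nonneg k) _
    · filter_upwards [Filter.eventually_gt_atTop 0] with k hk using hle k hk
  · intro Ω _ μ _ Y hY hYpos hmom
    have key : ∀ δ : ℝ, 0 < δ → μ {ω | B + δ ≤ Y ω} = 0 := by
      intro δ hδ
      have hBδ : 0 < B + δ := by linarith
      have hbound : ∀ k : ℕ, 0 < k →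
          (μ {ω | B + δ ≤ Y ω}).toReal ≤ (B / (B + δ)) ^ k := by
        intro k hk
        have hint : Integrable (fun ω => Y ω ^ k) μ := by
          by_contra h
          have := hmom k hk
          rw [integral_undef h] at this
          exact (momentY_pos hk).ne this
        have hmarkov := mul_meas_ge_le_integral_of_nonneg
          (μ := μ) (f := fun ω => Y ω ^ k)
          (ae_of_all _ fun ω => pow_nonneg (hYpos ω).le k) hint ((B + δ) ^ k)
        rw [hmom k hk] at hmarkov
        have hsub : {ω | B + δ ≤ Y ω} ⊆ {ω | (B + δ) ^ k ≤ Y ω ^ k} := by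
          intro ω hω
          exact pow_le_pow_left₀ hBδ.le hω k
        have hmono := measure_mono (μ := μ) hsub
        have hfin : μ {ω | (B + δ) ^ k ≤ Y ω ^ k} ≠ ⊤ := measure_ne_top μ _
        have htr : (μ {ω | B + δ ≤ Y ω}).toReal
            ≤ (μ {ω | (B + δ) ^ k ≤ Y ω ^ k}).toReal :=
          ENNReal.toReal_mono hfin hmono
        have hBk : (0:ℝ) < (B + δ) ^ k := by positivity
        have h2 : (μ {ω | (B + δ) ^ k ≤ Y ω ^ k}).toReal ≤ momentY k / (B + δ) ^ k := by
          rw [le_div_iff₀ hBk]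
          rw [measureReal_def] at hmarkov
          linarith [hmarkov]
        have h3 : momentY k / (B + δ) ^ k ≤ (B / (B + δ)) ^ k := by
          rw [div_pow]
          gcongr
          exact momentY_le k hk
        linarith
      have htend : Tendsto (fun k : ℕ => (B / (B + δ)) ^ k) atTop (nhds 0) := by
        apply tendsto_pow_atTop_nhds_zero_of_lt_one (by positivity)
        rw [div_lt_one hBδ]; linarith
      have h0 : (μ {ω | B + δ ≤ Y ω}).toReal ≤ 0 := by
        apply ge_of_tendsto htend
        filter_upwards [Filter.eventually_gt_atTop 0] with k hk using hbound k hk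
      have := ENNReal.toReal_nonneg (a := μ {ω | B + δ ≤ Y ω})
      have hzero : (μ {ω | B + δ ≤ Y ω}).toReal = 0 := le_antisymm h0 this
      rw [ENNReal.toReal_eq_zero_iff] at hzero
      rcases hzero with h | h
      · exact h
      · exact absurd h (measure_ne_top μ _)
    have hsub : {ω | B < Y ω} ⊆ ⋃ n : ℕ, {ω | B + 1 / (n + 1) ≤ Y ω} := by
      intro ω hω
      simp only [Set.mem_setOf_eq] at hω
      obtain ⟨n, hn⟩ := exists_nat_one_div_lt (show (0:ℝ) < Y ω - B by linarith)
      exact Set.mem_iUnion.2 ⟨n, by simp only [Set.mem_setOf_eq]; push_cast; linarith⟩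
    apply measure_mono_null hsub
    rw [measure_iUnion_null_iff]
    intro n
    exact key (1 / (n + 1)) (by positivity)
end

section
/- Let σ > 0 and define g(s) = e^{σ²s/2} · ₁F₁(1-s; 2; -σ²s) as an entire function of s. Then the fourth derivative satisfies g''''(0) = 2σ⁴ + σ⁶/3 + σ⁸/80. -/
open Finset

/-- Confluent hypergeometric function `₁F₁(a; 2; z)` (second parameter fixed to `2`). -/
noncomputable def oneF1two (a z : ℝ) : ℝ :=
  ∑' n : ℕ, (∏ j ∈ Finset.range n, (a + j)) * z ^ n / ((n + 1).factorial * n.factorial)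

namespace FMaux

/-- coefficient of the monomial attached to `(m, n, S)`. -/
noncomputable def coef (A T : ℝ) (m n : ℕ) (S : Finset ℕ) : ℝ :=
  A ^ m / m.factorial * ((-T) ^ n / ((n + 1).factorial * n.factorial)) *
    ((-1 : ℝ) ^ (n - S.card) * ∏ j ∈ S, ((1 : ℝ) + j))

/-- degree of the monomial attached to `(m, n, S)`. -/
def deg (m n : ℕ) (S : Finset ℕ) : ℕ := m + n + (n - S.card)

/-- `k`-th derivative of the `(m,n)` term. -/
noncomputable def W (A T : ℝ) (k : ℕ) (p : ℕ × ℕ) (s : ℝ) : ℝ :=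
  ∑ S ∈ (Finset.range p.2).powerset,
    coef A T p.1 p.2 S * (Nat.descFactorial (deg p.1 p.2 S) k) * s ^ (deg p.1 p.2 S - k)

theorem prod_two_add (n : ℕ) : (∏ j ∈ range n, ((2 : ℝ) + j)) = (n + 1).factorial := by
  induction n with
  | zero => simp
  | succ n ih =>
    rw [Finset.prod_range_succ, ih, Nat.factorial_succ (n + 1)]
    push_cast
    ring

theorem sum_prod_one_add (n : ℕ) :
    (∑ S ∈ (Finset.range n).powerset, ∏ j ∈ S, ((1 : ℝ) + j)) = (n + 1).factorial := by
  have h := Finset.prod_add (fun j : ℕ => ((1 : ℝ) + j)) (fun _ => (1 : ℝ)) (Finset.range n)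
  simp only [Finset.prod_const_one, mul_one] at h
  rw [← h, ← prod_two_add n]
  exact Finset.prod_congr rfl (by intro j _; ring)

theorem W_zero (A T : ℝ) (m n : ℕ) (s : ℝ) :
    W A T 0 (m, n) s = (A * s) ^ m / m.factorial *
      ((∏ j ∈ range n, (1 - s + j)) * (-(T * s)) ^ n / ((n + 1).factorial * n.factorial)) := by
  have h1 : (∏ j ∈ range n, (1 - s + (j : ℝ))) = ∏ j ∈ range n, (((1 : ℝ) + j) + (-s)) :=
    Finset.prod_congr rfl (by intro j _; ring)
  rw [h1, Finset.prod_add]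
  rw [Finset.sum_mul, Finset.sum_div, Finset.mul_sum]
  unfold W
  refine Finset.sum_congr rfl ?_
  intro S hS
  have hc : (Finset.range n \ S).card = n - S.card := by
    rw [Finset.card_sdiff_of_subset (Finset.mem_powerset.1 hS), Finset.card_range]
  rw [Finset.prod_const, hc]
  simp only [coef, deg, Nat.descFactorial_zero, Nat.cast_one, mul_one, Nat.sub_zero]
  have h2 : (-(T * s)) ^ n = (-T) ^ n * s ^ n := by rw [neg_mul_eq_neg_mul, mul_pow]
  rw [neg_pow s (n - S.card), h2, mul_pow A s m, pow_add, pow_add]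
  ring


theorem W_hasDerivAt (A T : ℝ) (k : ℕ) (p : ℕ × ℕ) (y : ℝ) :
    HasDerivAt (W A T k p) (W A T (k + 1) p y) y := by
  unfold W
  apply HasDerivAt.fun_sum
  intro S _
  have h := (hasDerivAt_pow (deg p.1 p.2 S - k) y).const_mul
    (coef A T p.1 p.2 S * (Nat.descFactorial (deg p.1 p.2 S) k : ℝ))
  refine h.congr_deriv ?_
  rw [Nat.descFactorial_succ, ← Nat.sub_sub]
  push_cast
  ring

/-- summable majorant. -/
noncomputable def u (A T : ℝ) (p : ℕ × ℕ) : ℝ :=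
  ((1 + p.1 + 2 * p.2 : ℕ) : ℝ) ^ 4 * (|A| ^ p.1 / p.1.factorial) * (|T| ^ p.2 / p.2.factorial)

theorem u_nonneg (A T : ℝ) (p : ℕ × ℕ) : 0 ≤ u A T p := by
  unfold u
  positivity

theorem W_bound (A T : ℝ) (k : ℕ) (hk : k ≤ 4) (p : ℕ × ℕ) (s : ℝ) (hs : |s| ≤ 1) :
    |W A T k p s| ≤ u A T p := by
  obtain ⟨m, n⟩ := p
  calc |W A T k (m, n) s|
      ≤ ∑ S ∈ (Finset.range n).powerset,
          |coef A T m n S * (Nat.descFactorial (deg m n S) k) * s ^ (deg m n S - k)| :=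
        Finset.abs_sum_le_sum_abs _ _
    _ ≤ ∑ S ∈ (Finset.range n).powerset,
          ((1 + m + 2 * n : ℕ) : ℝ) ^ 4 *
            (|A| ^ m / m.factorial * (|T| ^ n / ((n + 1).factorial * n.factorial)) *
              ∏ j ∈ S, ((1 : ℝ) + j)) := by
        refine Finset.sum_le_sum ?_
        intro S hS
        have hprod : (0:ℝ) ≤ ∏ j ∈ S, ((1 : ℝ) + j) :=
          Finset.prod_nonneg (by intro j _; positivity)
        have hcoef : |coef A T m n S| =
            |A| ^ m / m.factorial * (|T| ^ n / ((n + 1).factorial * n.factorial)) *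
              ∏ j ∈ S, ((1 : ℝ) + j) := by
          simp [coef, abs_mul, abs_div, abs_pow, abs_of_nonneg hprod, Nat.abs_cast]
        have hdf : ((Nat.descFactorial (deg m n S) k : ℕ) : ℝ) ≤ ((1 + m + 2 * n : ℕ) : ℝ) ^ 4 := by
          rw [show (((1 + m + 2 * n : ℕ) : ℝ) ^ 4) = (((1 + m + 2 * n) ^ 4 : ℕ) : ℝ) by push_cast; ring]
          have h1 : Nat.descFactorial (deg m n S) k ≤ (deg m n S) ^ k :=
            Nat.descFactorial_le_pow _ _
          have h2 : deg m n S ≤ 1 + m + 2 * n := by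
            unfold deg; omega
          have h3 : (deg m n S) ^ k ≤ (1 + m + 2 * n) ^ k := Nat.pow_le_pow_left h2 k
          have h4 : (1 + m + 2 * n) ^ k ≤ (1 + m + 2 * n) ^ 4 :=
            Nat.pow_le_pow_right (by omega) hk
          exact_mod_cast (h1.trans h3).trans h4
        have hpow : |s| ^ (deg m n S - k) ≤ 1 := pow_le_one₀ (abs_nonneg s) hs
        rw [abs_mul, abs_mul, hcoef, abs_pow]
        calc |A| ^ m / m.factorial * (|T| ^ n / ((n + 1).factorial * n.factorial)) *
                (∏ j ∈ S, ((1 : ℝ) + j)) * |(Nat.descFactorial (deg m n S) k : ℝ)| *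
                |s| ^ (deg m n S - k)
            ≤ |A| ^ m / m.factorial * (|T| ^ n / ((n + 1).factorial * n.factorial)) *
                (∏ j ∈ S, ((1 : ℝ) + j)) * ((1 + m + 2 * n : ℕ) : ℝ) ^ 4 * 1 := by
              apply mul_le_mul
              apply mul_le_mul_of_nonneg_left
              · rw [abs_of_nonneg (by positivity : (0:ℝ) ≤ (Nat.descFactorial (deg m n S) k : ℝ))]
                exact hdf
              · positivity
              · exact hpow
              · positivity
              · positivity
          _ = ((1 + m + 2 * n : ℕ) : ℝ) ^ 4 *
                (|A| ^ m / m.factorial * (|T| ^ n / ((n + 1).factorial * n.factorial)) *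
                  ∏ j ∈ S, ((1 : ℝ) + j)) := by ring
    _ = u A T (m, n) := by
        rw [← Finset.mul_sum, ← Finset.mul_sum, sum_prod_one_add n]
        unfold u
        have h5 : ((n + 1).factorial : ℝ) ≠ 0 := by positivity
        field_simp


theorem u_summable (A T : ℝ) : Summable (u A T) := by
  have hmaj : Summable fun p : ℕ × ℕ =>
      (16 * |A|) ^ p.1 / p.1.factorial * ((256 * |T|) ^ p.2 / p.2.factorial) := by
    have h1 := Real.summable_pow_div_factorial (16 * |A|)
    have h2 := Real.summable_pow_div_factorial (256 * |T|)
    have h3 : ∀ m : ℕ, 0 ≤ (16 * |A|) ^ m / m.factorial := fun m => by positivity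
    have h4 : ∀ n : ℕ, 0 ≤ (256 * |T|) ^ n / n.factorial := fun n => by positivity
    exact h1.mul_of_nonneg h2 h3 h4
  refine Summable.of_nonneg_of_le (u_nonneg A T) ?_ hmaj
  rintro ⟨m, n⟩
  have h1 : (1 + m + 2 * n) ≤ 2 ^ m * 4 ^ n := by
    have ha : 1 + m ≤ 2 ^ m := by have := Nat.lt_two_pow_self (n := m); omega
    have hb : 1 + 2 * n ≤ 4 ^ n := by
      have := Nat.lt_two_pow_self (n := 2 * n)
      calc 1 + 2 * n ≤ 2 ^ (2 * n) := by omega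
        _ = 4 ^ n := by rw [pow_mul]; norm_num
    calc 1 + m + 2 * n ≤ (1 + m) * (1 + 2 * n) := by nlinarith
      _ ≤ 2 ^ m * 4 ^ n := Nat.mul_le_mul ha hb
  have hnat : ((1 + m + 2 * n : ℕ) : ℝ) ^ 4 ≤ 16 ^ m * 256 ^ n := by
    calc ((1 + m + 2 * n : ℕ) : ℝ) ^ 4 ≤ ((2 ^ m * 4 ^ n : ℕ) : ℝ) ^ 4 := by
          apply pow_le_pow_left₀ (by positivity) (by exact_mod_cast h1)
      _ = 16 ^ m * 256 ^ n := by
          push_cast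
          rw [mul_pow, ← pow_mul, ← pow_mul, show (16:ℝ) = 2 ^ 4 by norm_num,
            show (256:ℝ) = 4 ^ 4 by norm_num, ← pow_mul, ← pow_mul, mul_comm m 4, mul_comm n 4]
  calc u A T (m, n)
      = ((1 + m + 2 * n : ℕ) : ℝ) ^ 4 * (|A| ^ m / m.factorial) * (|T| ^ n / n.factorial) := rfl
    _ ≤ (16 ^ m * 256 ^ n) * (|A| ^ m / m.factorial) * (|T| ^ n / n.factorial) := by
        apply mul_le_mul_of_nonneg_right (mul_le_mul_of_nonneg_right hnat (by positivity))
          (by positivity)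
    _ = (16 * |A|) ^ m / m.factorial * ((256 * |T|) ^ n / n.factorial) := by
        rw [mul_pow, mul_pow]; ring

/-- sum of the `k`-th derivatives. -/
noncomputable def G (A T : ℝ) (k : ℕ) (y : ℝ) : ℝ := ∑' p : ℕ × ℕ, W A T k p y

theorem mem_ball_abs {y : ℝ} (hy : y ∈ Metric.ball (0 : ℝ) 1) : |y| ≤ 1 := by
  rw [Metric.mem_ball, Real.dist_eq, sub_zero] at hy
  exact hy.le

theorem G_hasDerivAt (A T : ℝ) (k : ℕ) (hk : k ≤ 3) {y : ℝ} (hy : y ∈ Metric.ball (0 : ℝ) 1) :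
    HasDerivAt (G A T k) (G A T (k + 1) y) y := by
  have h := hasDerivAt_tsum_of_isPreconnected (u_summable A T) Metric.isOpen_ball
    (convex_ball (0 : ℝ) 1).isPreconnected
    (g := W A T k) (g' := fun p z => W A T (k + 1) p z)
    (fun p z _ => W_hasDerivAt A T k p z)
    (fun p z hz => by
      rw [Real.norm_eq_abs]
      exact W_bound A T (k + 1) (by omega) p z (mem_ball_abs hz))
    (Metric.mem_ball_self one_pos)
    (Summable.of_norm_bounded (u_summable A T) fun p => by
      rw [Real.norm_eq_abs]
      exact W_bound A T k (by omega) p 0 (by simp))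
    hy
  exact h

theorem F_eq (σ : ℝ) (s : ℝ) (hs : |s| ≤ 1) :
    Real.exp (σ ^ 2 * s / 2) * oneF1two (1 - s) (-(σ ^ 2 * s)) = G (σ ^ 2 / 2) (σ ^ 2) 0 s := by
  have hexp : Real.exp (σ ^ 2 * s / 2) = ∑' m : ℕ, (σ ^ 2 / 2 * s) ^ m / (m.factorial : ℝ) := by
    have : σ ^ 2 * s / 2 = σ ^ 2 / 2 * s := by ring
    rw [this, Real.exp_eq_exp_ℝ, NormedSpace.exp_eq_tsum_div]
  have hA : Summable fun m : ℕ => ‖(σ ^ 2 / 2 * s) ^ m / (m.factorial : ℝ)‖ := by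
    refine Summable.of_nonneg_of_le (fun _ => norm_nonneg _) ?_
      (Real.summable_pow_div_factorial |σ ^ 2 / 2 * s|)
    intro m
    rw [Real.norm_eq_abs, abs_div, abs_pow, Nat.abs_cast]
  have hB : Summable fun n : ℕ =>
      ‖(∏ j ∈ Finset.range n, (1 - s + (j : ℝ))) * (-(σ ^ 2 * s)) ^ n /
        ((n + 1).factorial * n.factorial : ℝ)‖ := by
    refine Summable.of_nonneg_of_le (fun _ => norm_nonneg _) ?_
      (Real.summable_pow_div_factorial |σ ^ 2|)
    intro n
    have hprod : |∏ j ∈ Finset.range n, (1 - s + (j : ℝ))| ≤ ((n + 1).factorial : ℝ) := by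
      rw [Finset.abs_prod]
      calc (∏ j ∈ Finset.range n, |1 - s + (j : ℝ)|)
          ≤ ∏ j ∈ Finset.range n, ((2 : ℝ) + j) := by
            apply Finset.prod_le_prod (fun j _ => abs_nonneg _)
            intro j _
            have hj : (0 : ℝ) ≤ j := Nat.cast_nonneg j
            have h1 := abs_le.1 hs
            rw [abs_le]
            constructor <;> linarith [h1.1, h1.2]
        _ = ((n + 1).factorial : ℝ) := prod_two_add n
    have hfac1 : (0:ℝ) < ((n + 1).factorial : ℝ) := by positivity
    have hfac2 : (0:ℝ) < (n.factorial : ℝ) := by positivity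
    rw [Real.norm_eq_abs, abs_div, abs_mul, abs_pow, abs_neg]
    rw [abs_of_pos (by positivity : (0:ℝ) < ((n + 1).factorial : ℝ) * n.factorial)]
    have h2 : |σ ^ 2 * s| ^ n ≤ |σ ^ 2| ^ n := by
      apply pow_le_pow_left₀ (abs_nonneg _)
      rw [abs_mul]
      calc |σ ^ 2| * |s| ≤ |σ ^ 2| * 1 := mul_le_mul_of_nonneg_left hs (abs_nonneg _)
        _ = |σ ^ 2| := mul_one _
    have hnum : |∏ j ∈ Finset.range n, (1 - s + (j : ℝ))| * |σ ^ 2 * s| ^ n ≤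
        ((n + 1).factorial : ℝ) * |σ ^ 2| ^ n :=
      mul_le_mul hprod h2 (by positivity) (by positivity)
    calc |∏ j ∈ Finset.range n, (1 - s + (j : ℝ))| * |σ ^ 2 * s| ^ n /
          (((n + 1).factorial : ℝ) * n.factorial)
        ≤ (((n + 1).factorial : ℝ) * |σ ^ 2| ^ n) /
          (((n + 1).factorial : ℝ) * n.factorial) := by
          exact (div_le_div_iff_of_pos_right (by positivity)).mpr hnum
      _ = |σ ^ 2| ^ n / n.factorial := by
          rw [div_eq_div_iff (by positivity) (by positivity)]
          ring
  unfold oneF1two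
  rw [hexp, tsum_mul_tsum_of_summable_norm hA hB]
  exact tsum_congr fun p => (W_zero (σ ^ 2 / 2) (σ ^ 2) p.1 p.2 s).symm

theorem psum0 (f : Finset ℕ → ℝ) :
    (∑ S ∈ (Finset.range 0).powerset, f S) = f ∅ := by
  rw [Finset.range_zero, Finset.powerset_empty, Finset.sum_singleton]

theorem psum1 (f : Finset ℕ → ℝ) :
    (∑ S ∈ (Finset.range 1).powerset, f S) = f ∅ + f (insert 0 ∅) := by
  rw [show Finset.range 1 = (insert 0 ∅ : Finset ℕ) by decide]
  simp only [Finset.sum_powerset_insert (by decide : (0:ℕ) ∉ (∅ : Finset ℕ))]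
  simp only [Finset.powerset_empty, Finset.sum_singleton]
  try ring

theorem psum2 (f : Finset ℕ → ℝ) :
    (∑ S ∈ (Finset.range 2).powerset, f S) = f ∅ + f (insert 0 ∅) + f (insert 1 ∅) + f (insert 0 (insert 1 ∅)) := by
  rw [show Finset.range 2 = (insert 0 (insert 1 ∅) : Finset ℕ) by decide]
  simp only [Finset.sum_powerset_insert (by decide : (0:ℕ) ∉ (insert 1 ∅ : Finset ℕ)), Finset.sum_powerset_insert (by decide : (1:ℕ) ∉ (∅ : Finset ℕ))]
  simp only [Finset.powerset_empty, Finset.sum_singleton]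
  try ring

theorem psum3 (f : Finset ℕ → ℝ) :
    (∑ S ∈ (Finset.range 3).powerset, f S) = f ∅ + f (insert 0 ∅) + f (insert 1 ∅) + f (insert 0 (insert 1 ∅)) + f (insert 2 ∅) + f (insert 0 (insert 2 ∅)) + f (insert 1 (insert 2 ∅)) + f (insert 0 (insert 1 (insert 2 ∅))) := by
  rw [show Finset.range 3 = (insert 0 (insert 1 (insert 2 ∅)) : Finset ℕ) by decide]
  simp only [Finset.sum_powerset_insert (by decide : (0:ℕ) ∉ (insert 1 (insert 2 ∅) : Finset ℕ)), Finset.sum_powerset_insert (by decide : (1:ℕ) ∉ (insert 2 ∅ : Finset ℕ)), Finset.sum_powerset_insert (by decide : (2:ℕ) ∉ (∅ : Finset ℕ))]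
  simp only [Finset.powerset_empty, Finset.sum_singleton]
  try ring

theorem psum4 (f : Finset ℕ → ℝ) :
    (∑ S ∈ (Finset.range 4).powerset, f S) = f ∅ + f (insert 0 ∅) + f (insert 1 ∅) + f (insert 0 (insert 1 ∅)) + f (insert 2 ∅) + f (insert 0 (insert 2 ∅)) + f (insert 1 (insert 2 ∅)) + f (insert 0 (insert 1 (insert 2 ∅))) + f (insert 3 ∅) + f (insert 0 (insert 3 ∅)) + f (insert 1 (insert 3 ∅)) + f (insert 0 (insert 1 (insert 3 ∅))) + f (insert 2 (insert 3 ∅)) + f (insert 0 (insert 2 (insert 3 ∅))) + f (insert 1 (insert 2 (insert 3 ∅))) + f (insert 0 (insert 1 (insert 2 (insert 3 ∅)))) := by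
  rw [show Finset.range 4 = (insert 0 (insert 1 (insert 2 (insert 3 ∅))) : Finset ℕ) by decide]
  simp only [Finset.sum_powerset_insert (by decide : (0:ℕ) ∉ (insert 1 (insert 2 (insert 3 ∅)) : Finset ℕ)), Finset.sum_powerset_insert (by decide : (1:ℕ) ∉ (insert 2 (insert 3 ∅) : Finset ℕ)), Finset.sum_powerset_insert (by decide : (2:ℕ) ∉ (insert 3 ∅ : Finset ℕ)), Finset.sum_powerset_insert (by decide : (3:ℕ) ∉ (∅ : Finset ℕ))]
  simp only [Finset.powerset_empty, Finset.sum_singleton]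
  try ring

set_option maxHeartbeats 1000000 in
theorem G4_eval (σ : ℝ) : G (σ ^ 2 / 2) (σ ^ 2) 4 0 = 2 * σ ^ 4 + σ ^ 6 / 3 + σ ^ 8 / 80 := by
  have hvan : ∀ p : ℕ × ℕ, p ∉ Finset.range 5 ×ˢ Finset.range 5 →
      W (σ ^ 2 / 2) (σ ^ 2) 4 p 0 = 0 := by
    intro p hp
    rw [Finset.mem_product] at hp
    simp only [Finset.mem_range, not_and_or, not_lt] at hp
    apply Finset.sum_eq_zero
    intro S hS
    have hd : deg p.1 p.2 S - 4 ≠ 0 := by unfold deg; omega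
    rw [zero_pow hd, mul_zero]
  unfold G
  rw [tsum_eq_sum hvan, Finset.sum_product]
  simp only [Finset.sum_range_succ, Finset.sum_range_zero]
  have e00 : W (σ ^ 2 / 2) (σ ^ 2) 4 (0, 0) 0 = 0 := by
    rw [show W (σ ^ 2 / 2) (σ ^ 2) 4 (0, 0) 0 = _ from rfl, W, psum0]
    norm_num [coef, deg, Finset.prod_insert, Finset.card_insert_of_notMem, Finset.mem_insert,
      Finset.mem_singleton, Finset.notMem_empty, Finset.prod_empty, Finset.card_empty,
      Nat.descFactorial, Nat.factorial]
    try ring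
  have e01 : W (σ ^ 2 / 2) (σ ^ 2) 4 (0, 1) 0 = 0 := by
    rw [show W (σ ^ 2 / 2) (σ ^ 2) 4 (0, 1) 0 = _ from rfl, W, psum1]
    norm_num [coef, deg, Finset.prod_insert, Finset.card_insert_of_notMem, Finset.mem_insert,
      Finset.mem_singleton, Finset.notMem_empty, Finset.prod_empty, Finset.card_empty,
      Nat.descFactorial, Nat.factorial]
    try ring
  have e02 : W (σ ^ 2 / 2) (σ ^ 2) 4 (0, 2) 0 = 2 * σ ^ 4 := by
    rw [show W (σ ^ 2 / 2) (σ ^ 2) 4 (0, 2) 0 = _ from rfl, W, psum2]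
    norm_num [coef, deg, Finset.prod_insert, Finset.card_insert_of_notMem, Finset.mem_insert,
      Finset.mem_singleton, Finset.notMem_empty, Finset.prod_empty, Finset.card_empty,
      Nat.descFactorial, Nat.factorial]
    try ring
  have e03 : W (σ ^ 2 / 2) (σ ^ 2) 4 (0, 3) 0 = 11 * σ ^ 6 / 6 := by
    rw [show W (σ ^ 2 / 2) (σ ^ 2) 4 (0, 3) 0 = _ from rfl, W, psum3]
    norm_num [coef, deg, Finset.prod_insert, Finset.card_insert_of_notMem, Finset.mem_insert,
      Finset.mem_singleton, Finset.notMem_empty, Finset.prod_empty, Finset.card_empty,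
      Nat.descFactorial, Nat.factorial]
    try ring
  have e04 : W (σ ^ 2 / 2) (σ ^ 2) 4 (0, 4) 0 = 1 * σ ^ 8 / 5 := by
    rw [show W (σ ^ 2 / 2) (σ ^ 2) 4 (0, 4) 0 = _ from rfl, W, psum4]
    norm_num [coef, deg, Finset.prod_insert, Finset.card_insert_of_notMem, Finset.mem_insert,
      Finset.mem_singleton, Finset.notMem_empty, Finset.prod_empty, Finset.card_empty,
      Nat.descFactorial, Nat.factorial]
    try ring
  have e10 : W (σ ^ 2 / 2) (σ ^ 2) 4 (1, 0) 0 = 0 := by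
    rw [show W (σ ^ 2 / 2) (σ ^ 2) 4 (1, 0) 0 = _ from rfl, W, psum0]
    norm_num [coef, deg, Finset.prod_insert, Finset.card_insert_of_notMem, Finset.mem_insert,
      Finset.mem_singleton, Finset.notMem_empty, Finset.prod_empty, Finset.card_empty,
      Nat.descFactorial, Nat.factorial]
    try ring
  have e11 : W (σ ^ 2 / 2) (σ ^ 2) 4 (1, 1) 0 = 0 := by
    rw [show W (σ ^ 2 / 2) (σ ^ 2) 4 (1, 1) 0 = _ from rfl, W, psum1]
    norm_num [coef, deg, Finset.prod_insert, Finset.card_insert_of_notMem, Finset.mem_insert,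
      Finset.mem_singleton, Finset.notMem_empty, Finset.prod_empty, Finset.card_empty,
      Nat.descFactorial, Nat.factorial]
    try ring
  have e12 : W (σ ^ 2 / 2) (σ ^ 2) 4 (1, 2) 0 = (-3) * σ ^ 6 := by
    rw [show W (σ ^ 2 / 2) (σ ^ 2) 4 (1, 2) 0 = _ from rfl, W, psum2]
    norm_num [coef, deg, Finset.prod_insert, Finset.card_insert_of_notMem, Finset.mem_insert,
      Finset.mem_singleton, Finset.notMem_empty, Finset.prod_empty, Finset.card_empty,
      Nat.descFactorial, Nat.factorial]
    try ring
  have e13 : W (σ ^ 2 / 2) (σ ^ 2) 4 (1, 3) 0 = (-1) * σ ^ 8 / 2 := by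
    rw [show W (σ ^ 2 / 2) (σ ^ 2) 4 (1, 3) 0 = _ from rfl, W, psum3]
    norm_num [coef, deg, Finset.prod_insert, Finset.card_insert_of_notMem, Finset.mem_insert,
      Finset.mem_singleton, Finset.notMem_empty, Finset.prod_empty, Finset.card_empty,
      Nat.descFactorial, Nat.factorial]
    try ring
  have e14 : W (σ ^ 2 / 2) (σ ^ 2) 4 (1, 4) 0 = 0 := by
    rw [show W (σ ^ 2 / 2) (σ ^ 2) 4 (1, 4) 0 = _ from rfl, W, psum4]
    norm_num [coef, deg, Finset.prod_insert, Finset.card_insert_of_notMem, Finset.mem_insert,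
      Finset.mem_singleton, Finset.notMem_empty, Finset.prod_empty, Finset.card_empty,
      Nat.descFactorial, Nat.factorial]
    try ring
  have e20 : W (σ ^ 2 / 2) (σ ^ 2) 4 (2, 0) 0 = 0 := by
    rw [show W (σ ^ 2 / 2) (σ ^ 2) 4 (2, 0) 0 = _ from rfl, W, psum0]
    norm_num [coef, deg, Finset.prod_insert, Finset.card_insert_of_notMem, Finset.mem_insert,
      Finset.mem_singleton, Finset.notMem_empty, Finset.prod_empty, Finset.card_empty,
      Nat.descFactorial, Nat.factorial]
    try ring
  have e21 : W (σ ^ 2 / 2) (σ ^ 2) 4 (2, 1) 0 = 3 * σ ^ 6 / 2 := by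
    rw [show W (σ ^ 2 / 2) (σ ^ 2) 4 (2, 1) 0 = _ from rfl, W, psum1]
    norm_num [coef, deg, Finset.prod_insert, Finset.card_insert_of_notMem, Finset.mem_insert,
      Finset.mem_singleton, Finset.notMem_empty, Finset.prod_empty, Finset.card_empty,
      Nat.descFactorial, Nat.factorial]
    try ring
  have e22 : W (σ ^ 2 / 2) (σ ^ 2) 4 (2, 2) 0 = 1 * σ ^ 8 / 2 := by
    rw [show W (σ ^ 2 / 2) (σ ^ 2) 4 (2, 2) 0 = _ from rfl, W, psum2]
    norm_num [coef, deg, Finset.prod_insert, Finset.card_insert_of_notMem, Finset.mem_insert,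
      Finset.mem_singleton, Finset.notMem_empty, Finset.prod_empty, Finset.card_empty,
      Nat.descFactorial, Nat.factorial]
    try ring
  have e23 : W (σ ^ 2 / 2) (σ ^ 2) 4 (2, 3) 0 = 0 := by
    rw [show W (σ ^ 2 / 2) (σ ^ 2) 4 (2, 3) 0 = _ from rfl, W, psum3]
    norm_num [coef, deg, Finset.prod_insert, Finset.card_insert_of_notMem, Finset.mem_insert,
      Finset.mem_singleton, Finset.notMem_empty, Finset.prod_empty, Finset.card_empty,
      Nat.descFactorial, Nat.factorial]
    try ring
  have e24 : W (σ ^ 2 / 2) (σ ^ 2) 4 (2, 4) 0 = 0 := by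
    rw [show W (σ ^ 2 / 2) (σ ^ 2) 4 (2, 4) 0 = _ from rfl, W, psum4]
    norm_num [coef, deg, Finset.prod_insert, Finset.card_insert_of_notMem, Finset.mem_insert,
      Finset.mem_singleton, Finset.notMem_empty, Finset.prod_empty, Finset.card_empty,
      Nat.descFactorial, Nat.factorial]
    try ring
  have e30 : W (σ ^ 2 / 2) (σ ^ 2) 4 (3, 0) 0 = 0 := by
    rw [show W (σ ^ 2 / 2) (σ ^ 2) 4 (3, 0) 0 = _ from rfl, W, psum0]
    norm_num [coef, deg, Finset.prod_insert, Finset.card_insert_of_notMem, Finset.mem_insert,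
      Finset.mem_singleton, Finset.notMem_empty, Finset.prod_empty, Finset.card_empty,
      Nat.descFactorial, Nat.factorial]
    try ring
  have e31 : W (σ ^ 2 / 2) (σ ^ 2) 4 (3, 1) 0 = (-1) * σ ^ 8 / 4 := by
    rw [show W (σ ^ 2 / 2) (σ ^ 2) 4 (3, 1) 0 = _ from rfl, W, psum1]
    norm_num [coef, deg, Finset.prod_insert, Finset.card_insert_of_notMem, Finset.mem_insert,
      Finset.mem_singleton, Finset.notMem_empty, Finset.prod_empty, Finset.card_empty,
      Nat.descFactorial, Nat.factorial]
    try ring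
  have e32 : W (σ ^ 2 / 2) (σ ^ 2) 4 (3, 2) 0 = 0 := by
    rw [show W (σ ^ 2 / 2) (σ ^ 2) 4 (3, 2) 0 = _ from rfl, W, psum2]
    norm_num [coef, deg, Finset.prod_insert, Finset.card_insert_of_notMem, Finset.mem_insert,
      Finset.mem_singleton, Finset.notMem_empty, Finset.prod_empty, Finset.card_empty,
      Nat.descFactorial, Nat.factorial]
    try ring
  have e33 : W (σ ^ 2 / 2) (σ ^ 2) 4 (3, 3) 0 = 0 := by
    rw [show W (σ ^ 2 / 2) (σ ^ 2) 4 (3, 3) 0 = _ from rfl, W, psum3]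
    norm_num [coef, deg, Finset.prod_insert, Finset.card_insert_of_notMem, Finset.mem_insert,
      Finset.mem_singleton, Finset.notMem_empty, Finset.prod_empty, Finset.card_empty,
      Nat.descFactorial, Nat.factorial]
    try ring
  have e34 : W (σ ^ 2 / 2) (σ ^ 2) 4 (3, 4) 0 = 0 := by
    rw [show W (σ ^ 2 / 2) (σ ^ 2) 4 (3, 4) 0 = _ from rfl, W, psum4]
    norm_num [coef, deg, Finset.prod_insert, Finset.card_insert_of_notMem, Finset.mem_insert,
      Finset.mem_singleton, Finset.notMem_empty, Finset.prod_empty, Finset.card_empty,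
      Nat.descFactorial, Nat.factorial]
    try ring
  have e40 : W (σ ^ 2 / 2) (σ ^ 2) 4 (4, 0) 0 = 1 * σ ^ 8 / 16 := by
    rw [show W (σ ^ 2 / 2) (σ ^ 2) 4 (4, 0) 0 = _ from rfl, W, psum0]
    norm_num [coef, deg, Finset.prod_insert, Finset.card_insert_of_notMem, Finset.mem_insert,
      Finset.mem_singleton, Finset.notMem_empty, Finset.prod_empty, Finset.card_empty,
      Nat.descFactorial, Nat.factorial]
    try ring
  have e41 : W (σ ^ 2 / 2) (σ ^ 2) 4 (4, 1) 0 = 0 := by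
    rw [show W (σ ^ 2 / 2) (σ ^ 2) 4 (4, 1) 0 = _ from rfl, W, psum1]
    norm_num [coef, deg, Finset.prod_insert, Finset.card_insert_of_notMem, Finset.mem_insert,
      Finset.mem_singleton, Finset.notMem_empty, Finset.prod_empty, Finset.card_empty,
      Nat.descFactorial, Nat.factorial]
    try ring
  have e42 : W (σ ^ 2 / 2) (σ ^ 2) 4 (4, 2) 0 = 0 := by
    rw [show W (σ ^ 2 / 2) (σ ^ 2) 4 (4, 2) 0 = _ from rfl, W, psum2]
    norm_num [coef, deg, Finset.prod_insert, Finset.card_insert_of_notMem, Finset.mem_insert,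
      Finset.mem_singleton, Finset.notMem_empty, Finset.prod_empty, Finset.card_empty,
      Nat.descFactorial, Nat.factorial]
    try ring
  have e43 : W (σ ^ 2 / 2) (σ ^ 2) 4 (4, 3) 0 = 0 := by
    rw [show W (σ ^ 2 / 2) (σ ^ 2) 4 (4, 3) 0 = _ from rfl, W, psum3]
    norm_num [coef, deg, Finset.prod_insert, Finset.card_insert_of_notMem, Finset.mem_insert,
      Finset.mem_singleton, Finset.notMem_empty, Finset.prod_empty, Finset.card_empty,
      Nat.descFactorial, Nat.factorial]
    try ring
  have e44 : W (σ ^ 2 / 2) (σ ^ 2) 4 (4, 4) 0 = 0 := by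
    rw [show W (σ ^ 2 / 2) (σ ^ 2) 4 (4, 4) 0 = _ from rfl, W, psum4]
    norm_num [coef, deg, Finset.prod_insert, Finset.card_insert_of_notMem, Finset.mem_insert,
      Finset.mem_singleton, Finset.notMem_empty, Finset.prod_empty, Finset.card_empty,
      Nat.descFactorial, Nat.factorial]
    try ring
  rw [e00, e01, e02, e03, e04, e10, e11, e12, e13, e14, e20, e21, e22, e23, e24, e30, e31, e32, e33, e34, e40, e41, e42, e43, e44]
  ring
end FMaux

theorem fourth_moment_logY (σ : ℝ) (hσ : 0 < σ) :
    iteratedDeriv 4 (fun s : ℝ => Real.exp (σ ^ 2 * s / 2) * oneF1two (1 - s) (-(σ ^ 2 * s))) 0 =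
      2 * σ ^ 4 + σ ^ 6 / 3 + σ ^ 8 / 80 := by
  classical
  open FMaux in
  have mem0 : (0 : ℝ) ∈ Metric.ball (0 : ℝ) 1 := Metric.mem_ball_self one_pos
  have hF : ∀ y ∈ Metric.ball (0 : ℝ) 1,
      (fun s : ℝ => Real.exp (σ ^ 2 * s / 2) * oneF1two (1 - s) (-(σ ^ 2 * s))) y =
        FMaux.G (σ ^ 2 / 2) (σ ^ 2) 0 y :=
    fun y hy => FMaux.F_eq σ y (FMaux.mem_ball_abs hy)
  have d : ∀ k : ℕ, k ≤ 3 → ∀ φ : ℝ → ℝ,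
      (∀ y ∈ Metric.ball (0 : ℝ) 1, φ y = FMaux.G (σ ^ 2 / 2) (σ ^ 2) k y) →
      ∀ y ∈ Metric.ball (0 : ℝ) 1, deriv φ y = FMaux.G (σ ^ 2 / 2) (σ ^ 2) (k + 1) y := by
    intro k hk φ hφ y hy
    have h1 : φ =ᶠ[nhds y] FMaux.G (σ ^ 2 / 2) (σ ^ 2) k :=
      Filter.eventuallyEq_of_mem (Metric.isOpen_ball.mem_nhds hy) hφ
    rw [h1.deriv_eq]
    exact (FMaux.G_hasDerivAt (σ ^ 2 / 2) (σ ^ 2) k hk hy).deriv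
  have d1 := d 0 (by norm_num) _ hF
  have d2 := d 1 (by norm_num) _ d1
  have d3 := d 2 (by norm_num) _ d2
  have d4 := d 3 (by norm_num) _ d3
  have hit : iteratedDeriv 4
      (fun s : ℝ => Real.exp (σ ^ 2 * s / 2) * oneF1two (1 - s) (-(σ ^ 2 * s))) 0 =
      deriv (deriv (deriv (deriv
        (fun s : ℝ => Real.exp (σ ^ 2 * s / 2) * oneF1two (1 - s) (-(σ ^ 2 * s)))))) 0 := by
    rw [show (4 : ℕ) = 0 + 1 + 1 + 1 + 1 from rfl, iteratedDeriv_succ, iteratedDeriv_succ,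
      iteratedDeriv_succ, iteratedDeriv_succ, iteratedDeriv_zero]
  rw [hit, d4 0 mem0]
  exact FMaux.G4_eval σ
end

section
/- For every positive integer k and every complex z, the k-th derivative at t = 0 of the function t ↦ z/(e^{-t} - z), for |z| < 1, equals Σ_{l≥1} l^k z^l. -/
open Complex Filter

private lemma summable_aux (m : ℕ) {q : ℝ} (h1 : q < 1) (h0 : 0 ≤ q) :
    Summable (fun l : ℕ => ((l : ℝ) + 1) ^ m * q ^ (l + 1)) := by
  have h := summable_pow_mul_geometric_of_norm_lt_one (R := ℝ) m
    (r := q) (by simpa [_root_.abs_of_nonneg h0] using h1)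
  have := h.comp_injective Nat.succ_injective
  refine this.congr fun l => ?_
  simp only [Function.comp, Nat.succ_eq_add_one]
  push_cast
  ring

theorem iteratedDeriv_geom_exp (k : ℕ) (hk : 0 < k) (z : ℂ) (hz : ‖z‖ < 1) :
    iteratedDeriv k (fun t : ℂ => z / (Complex.exp (-t) - z)) 0 =
      ∑' l : ℕ, ((l : ℂ) + 1) ^ k * z ^ (l + 1) := by
  -- choose r > 0 with |z| * exp r < 1
  obtain ⟨r, hr0, hr1⟩ : ∃ r > (0:ℝ), ‖z‖ * Real.exp r < 1 := by
    rcases eq_or_ne z 0 with rfl | hz0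
    · exact ⟨1, one_pos, by simp⟩
    · have habs : (0:ℝ) < ‖z‖ := norm_pos_iff.mpr hz0
      have hinv : (1:ℝ) < (‖z‖)⁻¹ := (one_lt_inv₀ habs).2 hz
      refine ⟨Real.log (‖z‖)⁻¹ / 2, div_pos (Real.log_pos hinv) two_pos, ?_⟩
      have hexp : Real.exp (Real.log (‖z‖)⁻¹ / 2)
          = (‖z‖)⁻¹ ^ ((1:ℝ)/2) := by
        rw [Real.rpow_def_of_pos (inv_pos.2 habs)]
        congr 1
        ring
      have hlt : (‖z‖)⁻¹ ^ ((1:ℝ)/2) < (‖z‖)⁻¹ := by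
        nth_rewrite 2 [← Real.rpow_one (‖z‖)⁻¹]
        exact Real.rpow_lt_rpow_of_exponent_lt hinv (by norm_num)
      calc ‖z‖ * Real.exp (Real.log (‖z‖)⁻¹ / 2)
          = ‖z‖ * (‖z‖)⁻¹ ^ ((1:ℝ)/2) := by rw [hexp]
        _ < ‖z‖ * (‖z‖)⁻¹ := by
            exact mul_lt_mul_of_pos_left hlt habs
        _ = 1 := mul_inv_cancel₀ habs.ne'
  set U : Set ℂ := Complex.re ⁻¹' Set.Iio r with hU_def
  have hU : IsOpen U := (isOpen_Iio).preimage Complex.continuous_re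
  have h0U : (0:ℂ) ∈ U := by simpa [hU_def] using hr0
  have key : ∀ t ∈ U, ‖z * Complex.exp t‖ < 1 := by
    intro t ht
    rw [norm_mul, Complex.norm_exp]
    have h1 : Real.exp t.re ≤ Real.exp r := Real.exp_le_exp.2 (le_of_lt ht)
    calc ‖z‖ * Real.exp t.re ≤ ‖z‖ * Real.exp r := by
          exact mul_le_mul_of_nonneg_left h1 (by positivity)
      _ < 1 := hr1
  set q : ℝ := ‖z‖ * Real.exp r with hq_def
  have hq0 : 0 ≤ q := by positivity
  have ht_of : ∀ w : ℂ, w ∈ U → w.re < r := fun w hw => hw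
  -- the bound for terms
  have hbound : ∀ (m : ℕ) (l : ℕ) (w : ℂ), w ∈ U →
      ‖((l : ℂ) + 1) ^ m * z ^ (l + 1) * Complex.exp (((l : ℂ) + 1) * w)‖ ≤
        ((l : ℝ) + 1) ^ m * q ^ (l + 1) := by
    intro m l w hw
    rw [norm_mul, norm_mul, norm_pow, norm_pow]
    have h1 : ‖(l : ℂ) + 1‖ = (l : ℝ) + 1 := by
      rw [show ((l:ℂ) + 1) = ((l + 1 : ℕ) : ℂ) by push_cast; ring, Complex.norm_natCast]
      push_cast; ring
    rw [h1]
    have h2 : ‖Complex.exp (((l : ℂ) + 1) * w)‖ = Real.exp (((l:ℝ) + 1) * w.re) := by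
      rw [Complex.norm_exp]
      congr 1
      simp [Complex.mul_re]
    rw [h2, hq_def, mul_pow, ← mul_assoc]
    have hwre : w.re < r := ht_of w hw
    have he : Real.exp (((l:ℝ) + 1) * w.re) ≤ Real.exp r ^ (l + 1) := by
      rw [← Real.exp_nat_mul]
      apply Real.exp_le_exp.2
      push_cast
      have hl : (0:ℝ) ≤ (l:ℝ) + 1 := by positivity
      nlinarith
    exact mul_le_mul_of_nonneg_left he (by positivity)
  -- differentiability of terms
  have hdiff : ∀ (m : ℕ) (l : ℕ),
      Differentiable ℂ (fun t : ℂ => ((l : ℂ) + 1) ^ m * z ^ (l + 1) *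
        Complex.exp (((l : ℂ) + 1) * t)) := by
    intro m l
    apply Differentiable.const_mul
    exact Complex.differentiable_exp.comp (differentiable_id.const_mul _)
  -- derivative of each term
  have hderiv : ∀ (m : ℕ) (l : ℕ) (t : ℂ),
      deriv (fun t : ℂ => ((l : ℂ) + 1) ^ m * z ^ (l + 1) *
        Complex.exp (((l : ℂ) + 1) * t)) t
      = ((l : ℂ) + 1) ^ (m + 1) * z ^ (l + 1) * Complex.exp (((l : ℂ) + 1) * t) := by
    intro m l t
    have hd : HasDerivAt (fun t : ℂ => Complex.exp (((l : ℂ) + 1) * t))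
        (Complex.exp (((l : ℂ) + 1) * t) * ((l : ℂ) + 1)) t := by
      simpa using ((hasDerivAt_id t).const_mul ((l : ℂ) + 1)).cexp
    rw [(hd.const_mul (((l : ℂ) + 1) ^ m * z ^ (l + 1))).deriv]
    ring
  -- main claim: on U, iteratedDeriv m f = sum
  have main : ∀ (m : ℕ), ∀ t ∈ U,
      iteratedDeriv m (fun t : ℂ => z / (Complex.exp (-t) - z)) t
      = ∑' l : ℕ, ((l : ℂ) + 1) ^ m * z ^ (l + 1) * Complex.exp (((l : ℂ) + 1) * t) := by
    intro m
    induction m with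
    | zero =>
      intro t ht
      rw [iteratedDeriv_zero]
      have hw := key t ht
      set w := z * Complex.exp t with hw_def
      have hne : (1:ℂ) - w ≠ 0 := by
        intro h
        have : ‖w‖ = 1 := by
          have : w = 1 := by linear_combination -h
          simp [this]
        linarith
      have hexp : Complex.exp (-t) ≠ 0 := Complex.exp_ne_zero _
      have hden : Complex.exp (-t) - z ≠ 0 := by
        intro h
        apply hne
        have h2 : Complex.exp (-t) = z := by linear_combination h
        have : Complex.exp (-t) * Complex.exp t = 1 := by
          rw [← Complex.exp_add]; simp
        rw [h2] at this
        rw [hw_def]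
        linear_combination -this
      have hsum : ∑' l : ℕ, ((l : ℂ) + 1) ^ 0 * z ^ (l + 1) * Complex.exp (((l : ℂ) + 1) * t)
          = w / (1 - w) := by
        have hterm : ∀ l : ℕ, ((l : ℂ) + 1) ^ 0 * z ^ (l + 1) * Complex.exp (((l : ℂ) + 1) * t)
            = w * w ^ l := by
          intro l
          rw [hw_def]
          rw [mul_pow, pow_zero]
          rw [show ((l : ℂ) + 1) * t = t + l * t by ring, Complex.exp_add]
          rw [show ((l:ℂ) * t) = (l : ℕ) • t by simp, Complex.exp_nsmul]
          ring
        rw [tsum_congr hterm, tsum_mul_left, tsum_geometric_of_norm_lt_one (by simpa using hw)]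
        rw [div_eq_mul_inv]
      rw [hsum]
      rw [div_eq_div_iff hden hne, hw_def]
      have hee : Complex.exp (-t) * Complex.exp t = 1 := by
        rw [← Complex.exp_add]; simp
      linear_combination (-z) * hee
    | succ m ih =>
      intro t ht
      rw [iteratedDeriv_succ]
      have hev : iteratedDeriv m (fun t : ℂ => z / (Complex.exp (-t) - z)) =ᶠ[nhds t]
          (fun t => ∑' l : ℕ, ((l : ℂ) + 1) ^ m * z ^ (l + 1) *
            Complex.exp (((l : ℂ) + 1) * t)) :=
        eventuallyEq_of_mem (hU.mem_nhds ht) ih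
      rw [hev.deriv_eq]
      have hs := hasSum_deriv_of_summable_norm (summable_aux m hr1 hq0)
        (fun l => (hdiff m l).differentiableOn) hU (hbound m) ht
      rw [← hs.tsum_eq]
      exact tsum_congr fun l => hderiv m l t
  have := main k 0 h0U
  simpa using this
end

section
/- For positive integers k, let m_k = (1/k)·Σ_{m=0}^{k-1} (k^m/m!)·C(k, m+1) (so that e^{k/2} m_k is the k-th moment of the central limit Y). Then m_k ≥ 1 for all k ≥ 1, and m_k is strictly increasing in k for k ≥ 1. -/
open Finset

/-- `m_k = (1/k) Σ_{m<k} (k^m/m!) C(k,m+1)`. -/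
noncomputable def mSeq (k : ℕ) : ℝ :=
  (1 / k) * ∑ m ∈ Finset.range k, (k : ℝ) ^ m / m.factorial * (Nat.choose k (m + 1))

lemma choose_id' (k m : ℕ) : (k+1) * Nat.choose k (m+1) = Nat.choose (k+1) (m+1) * (k - m) := by
  have h1 := Nat.add_one_mul_choose_eq k (m+1)
  have h2 := Nat.choose_succ_right_eq (k+1) (m+1)
  simpa [Nat.succ_sub_succ] using h1.trans h2

lemma key_nat (k m : ℕ) : (k+1) * (k^m * Nat.choose k (m+1)) ≤ k * ((k+1)^m * Nat.choose (k+1) (m+1)) := by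
  calc (k+1) * (k^m * Nat.choose k (m+1)) = k^m * ((k+1) * Nat.choose k (m+1)) := by ring
    _ = k^m * (Nat.choose (k+1) (m+1) * (k - m)) := by rw [choose_id']
    _ ≤ (k+1)^m * (Nat.choose (k+1) (m+1) * k) := by
        apply Nat.mul_le_mul (Nat.pow_le_pow_left (by omega) m)
        exact Nat.mul_le_mul_left _ (by omega)
    _ = k * ((k+1)^m * Nat.choose (k+1) (m+1)) := by ring

lemma term_mono (k m : ℕ) (hk : 1 ≤ k) :
    (1/(k:ℝ)) * ((k : ℝ) ^ m / m.factorial * (Nat.choose k (m + 1))) ≤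
    (1/((k:ℝ)+1)) * (((k:ℝ)+1) ^ m / m.factorial * (Nat.choose (k+1) (m + 1))) := by
  have hkey : ((k:ℝ)+1) * ((k:ℝ)^m * (Nat.choose k (m+1):ℝ)) ≤
      (k:ℝ) * (((k:ℝ)+1)^m * (Nat.choose (k+1) (m+1):ℝ)) := by
    exact_mod_cast key_nat k m
  have hk0 : (0:ℝ) < k := by exact_mod_cast hk
  have hf : (0:ℝ) < m.factorial := by exact_mod_cast m.factorial_pos
  have h1 : (1/(k:ℝ)) * ((k : ℝ) ^ m / m.factorial * (Nat.choose k (m + 1))) =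
      ((k : ℝ) ^ m * (Nat.choose k (m + 1))) / ((k:ℝ) * m.factorial) := by
    field_simp
  have h2 : (1/((k:ℝ)+1)) * (((k:ℝ)+1) ^ m / m.factorial * (Nat.choose (k+1) (m + 1))) =
      (((k:ℝ)+1) ^ m * (Nat.choose (k+1) (m + 1))) / (((k:ℝ)+1) * m.factorial) := by
    field_simp
  rw [h1, h2, div_le_div_iff₀ (by positivity) (by positivity)]
  nlinarith [mul_le_mul_of_nonneg_right hkey hf.le]

theorem mSeq_one_le_and_strictMono :
    (∀ k : ℕ, 1 ≤ k → 1 ≤ mSeq k) ∧ ∀ k : ℕ, 1 ≤ k → mSeq k < mSeq (k + 1) := by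
  constructor
  · intro k hk
    have hk0 : (0:ℝ) < k := by exact_mod_cast hk
    have h0 : ((k:ℝ) ^ 0 / (0:ℕ).factorial * (Nat.choose k (0 + 1)) : ℝ) ≤
        ∑ m ∈ Finset.range k, (k : ℝ) ^ m / m.factorial * (Nat.choose k (m + 1)) := by
      apply Finset.single_le_sum (f := fun m => (k : ℝ) ^ m / m.factorial * (Nat.choose k (m + 1)))
      · intro i _; positivity
      · simp only [Finset.mem_range]; omega
    simp only [pow_zero, Nat.factorial_zero, Nat.choose_one_right] at h0
    have : (k:ℝ) ≤ ∑ m ∈ Finset.range k, (k : ℝ) ^ m / m.factorial * (Nat.choose k (m + 1)) := by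
      simpa using h0
    rw [mSeq, ge_iff_le.symm]
    calc (1:ℝ) = (1/(k:ℝ)) * k := by field_simp
      _ ≤ (1 / k) * ∑ m ∈ Finset.range k, (k : ℝ) ^ m / m.factorial * (Nat.choose k (m + 1)) := by
          apply mul_le_mul_of_nonneg_left this (by positivity)
  · intro k hk
    have hk0 : (0:ℝ) < k := by exact_mod_cast hk
    rw [mSeq, mSeq, Finset.mul_sum, Finset.mul_sum]
    push_cast
    calc ∑ m ∈ Finset.range k, (1/(k:ℝ)) * ((k : ℝ) ^ m / m.factorial * (Nat.choose k (m + 1)))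
        ≤ ∑ m ∈ Finset.range k, (1/((k:ℝ)+1)) * (((k:ℝ)+1) ^ m / m.factorial * (Nat.choose (k+1) (m + 1))) := by
          apply Finset.sum_le_sum
          intro m _
          exact term_mono k m hk
      _ < ∑ m ∈ Finset.range (k+1), (1/((k:ℝ)+1)) * (((k:ℝ)+1) ^ m / m.factorial * (Nat.choose (k+1) (m + 1))) := by
          rw [Finset.sum_range_succ]
          have : (0:ℝ) < (1/((k:ℝ)+1)) * (((k:ℝ)+1) ^ k / k.factorial * (Nat.choose (k+1) (k + 1))) := by
            simp only [Nat.choose_self]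
            positivity
          linarith
end
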